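/- Suppose the frame intertwining assumption holds, {f_k^n} are tight frames and the range condition (3.20) holds. Then 𝒜y is a least-squares solution of Ax = y, and for any least-squares solution x* and every k ∈ ℕ: Σ_m |⟨(𝒜y)_m, e_k^m⟩|² ≤ Σ_m |⟨x*_m, e_k^m⟩|²; moreover ‖x†‖ ≤ ‖𝒜y‖ ≤ √(B2/B1)‖x†‖ where B1, B2 are the frame bounds of {e_k^m}. -/

import Mathlib

open scoped ComplexInnerProductSpace Matrix

lemma toEL_mul {p q r : ℕ} (A : Matrix (Fin p) (Fin q) ℂ) (B : Matrix (Fin q) (Fin r) ℂ)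
    (v : EuclideanSpace ℂ (Fin r)) :
    Matrix.toEuclideanLin (A * B) v = Matrix.toEuclideanLin A (Matrix.toEuclideanLin B v) := by
  simp [Matrix.toEuclideanLin_apply, Matrix.mulVec_mulVec]

lemma herm_inner {p : ℕ} (P : Matrix (Fin p) (Fin p) ℂ) (hP : Pᴴ = P)
    (u v : EuclideanSpace ℂ (Fin p)) :
    ⟪Matrix.toEuclideanLin P u, v⟫ = ⟪u, Matrix.toEuclideanLin P v⟫ := by
  have h := Matrix.toEuclideanLin_conjTranspose_eq_adjoint P
  rw [hP] at h
  conv_lhs => rw [h]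
  rw [LinearMap.adjoint_inner_left]

lemma mp_aux {M N : ℕ} (Λ : Matrix (Fin N) (Fin M) ℂ) (Λd : Matrix (Fin M) (Fin N) ℂ)
    (h1 : Λ * Λd * Λ = Λ) (h3 : (Λ * Λd)ᴴ = Λ * Λd)
    (b : EuclideanSpace ℂ (Fin N)) (a : EuclideanSpace ℂ (Fin M)) :
    ‖Matrix.toEuclideanLin Λ (Matrix.toEuclideanLin Λd b) - b‖ ≤ ‖Matrix.toEuclideanLin Λ a - b‖ ∧
    (‖Matrix.toEuclideanLin Λ a - b‖ ≤ ‖Matrix.toEuclideanLin Λ (Matrix.toEuclideanLin Λd b) - b‖ →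
      Matrix.toEuclideanLin Λ a = Matrix.toEuclideanLin Λ (Matrix.toEuclideanLin Λd b)) := by
  set L := Matrix.toEuclideanLin Λ with hL
  set P := Matrix.toEuclideanLin (Λ * Λd) with hPdef
  have hLd : Matrix.toEuclideanLin Λ (Matrix.toEuclideanLin Λd b) = P b := (toEL_mul Λ Λd b).symm
  have hPL : ∀ u : EuclideanSpace ℂ (Fin M), P (L u) = L u := by
    intro u
    rw [hPdef, hL, ← toEL_mul, h1]
  have hPP : ∀ u : EuclideanSpace ℂ (Fin N), P (P u) = P u := by
    intro u
    rw [hPdef, ← toEL_mul]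
    congr 1
    rw [← Matrix.mul_assoc, h1]
  have horth : ⟪L a - P b, P b - b⟫ = 0 := by
    have hfix : P (L a - P b) = L a - P b := by
      rw [map_sub, hPL, hPP]
    calc ⟪L a - P b, P b - b⟫ = ⟪P (L a - P b), P b - b⟫ := by rw [hfix]
      _ = ⟪L a - P b, P (P b - b)⟫ := herm_inner _ h3 _ _
      _ = 0 := by rw [map_sub, hPP, sub_self, inner_zero_right]
  have hdecomp : L a - b = (L a - P b) + (P b - b) := by abel
  have hpyth : ‖L a - b‖ ^ 2 = ‖L a - P b‖ ^ 2 + ‖P b - b‖ ^ 2 := by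
    rw [hdecomp]
    simpa [pow_two] using norm_add_sq_eq_norm_sq_add_norm_sq_of_inner_eq_zero _ _ horth
  constructor
  · rw [hLd]
    rw [← pow_le_pow_iff_left₀ (norm_nonneg _) (norm_nonneg _) (two_ne_zero), hpyth]
    linarith [sq_nonneg ‖L a - P b‖]
  · intro hle
    rw [hLd] at hle ⊢
    have h2 : ‖L a - b‖ ^ 2 ≤ ‖P b - b‖ ^ 2 :=
      pow_le_pow_left₀ (norm_nonneg _) hle 2
    have h0 : ‖L a - P b‖ ^ 2 ≤ 0 := by linarith
    have hz : ‖L a - P b‖ = 0 :=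
      pow_eq_zero_iff two_ne_zero |>.mp (le_antisymm h0 (sq_nonneg _))
    exact sub_eq_zero.mp (norm_eq_zero.mp hz)

lemma mp_aux2 {M N : ℕ} (Λ : Matrix (Fin N) (Fin M) ℂ) (Λd : Matrix (Fin M) (Fin N) ℂ)
    (h2 : Λd * Λ * Λd = Λd) (h4 : (Λd * Λ)ᴴ = Λd * Λ)
    (b : EuclideanSpace ℂ (Fin N)) (a : EuclideanSpace ℂ (Fin M))
    (hab : Matrix.toEuclideanLin Λ a = Matrix.toEuclideanLin Λ (Matrix.toEuclideanLin Λd b)) :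
    ‖Matrix.toEuclideanLin Λd b‖ ≤ ‖a‖ := by
  set Q := Matrix.toEuclideanLin (Λd * Λ) with hQdef
  have hQa : Q a = Matrix.toEuclideanLin Λd b := by
    rw [hQdef, toEL_mul, hab, ← toEL_mul, ← toEL_mul, h2]
  have hQQ : ∀ u : EuclideanSpace ℂ (Fin M), Q (Q u) = Q u := by
    intro u
    rw [hQdef, ← toEL_mul]
    congr 1
    rw [← Matrix.mul_assoc, h2]
  have horth : ⟪Q a, a - Q a⟫ = 0 := by
    calc ⟪Q a, a - Q a⟫ = ⟪a, Q (a - Q a)⟫ := herm_inner _ h4 _ _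
      _ = 0 := by rw [map_sub, hQQ, sub_self, inner_zero_right]
  have hdecomp : a = Q a + (a - Q a) := by abel
  have hpyth : ‖a‖ ^ 2 = ‖Q a‖ ^ 2 + ‖a - Q a‖ ^ 2 := by
    conv_lhs => rw [hdecomp]
    simpa [pow_two] using norm_add_sq_eq_norm_sq_add_norm_sq_of_inner_eq_zero _ _ horth
  rw [← hQa]
  rw [← pow_le_pow_iff_left₀ (norm_nonneg _) (norm_nonneg _) (two_ne_zero), hpyth]
  linarith [sq_nonneg ‖a - Q a‖]


/-- If the intertwining assumption holds, `{f n k}` are tight frames (bound `C`) and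
the range condition holds, then `𝒜y` is a least-squares solution of `A x = y`; for any
least-squares solution `x*` and every `k` one has
`∑_m |⟪e m k, (𝒜y) m⟫|² ≤ ∑_m |⟪e m k, x* m⟫|²`; and
`‖x†‖ ≤ ‖𝒜y‖ ≤ √(B2/B1) ‖x†‖` where `B1, B2` are the frame bounds of `{e m k}`. -/
theorem frame_least_squares_properties
    {M N : ℕ}
    {Xs : Fin M → Type*} [∀ m, NormedAddCommGroup (Xs m)]
    [∀ m, InnerProductSpace ℂ (Xs m)] [∀ m, CompleteSpace (Xs m)]
    {Ys : Fin N → Type*} [∀ n, NormedAddCommGroup (Ys n)]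
    [∀ n, InnerProductSpace ℂ (Ys n)] [∀ n, CompleteSpace (Ys n)]
    (A : PiLp 2 Xs →L[ℂ] PiLp 2 Ys)
    (e : ∀ m, ℕ → Xs m) (f : ∀ n, ℕ → Ys n)
    (B1 B2 C : ℝ) (hB1 : 0 < B1) (hB2 : 0 < B2) (hC : 0 < C)
    (hframe_e : ∀ (m) (x : Xs m), (Summable fun k => ‖⟪e m k, x⟫‖ ^ 2) ∧
      B1 * ‖x‖ ^ 2 ≤ ∑' k, ‖⟪e m k, x⟫‖ ^ 2 ∧ ∑' k, ‖⟪e m k, x⟫‖ ^ 2 ≤ B2 * ‖x‖ ^ 2)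
    (htight_f : ∀ (n) (y : Ys n), HasSum (fun k => ‖⟪f n k, y⟫‖ ^ 2) (C * ‖y‖ ^ 2))
    (S T : ∀ m, Xs m →L[ℂ] Xs m)
    (hS : ∀ (m) (x : Xs m), HasSum (fun k => ⟪e m k, x⟫ • e m k) (S m x))
    (hST : ∀ m, S m ∘L T m = 1) (hTS : ∀ m, T m ∘L S m = 1)
    (Λ : ℕ → Matrix (Fin N) (Fin M) ℂ)
    (hΛ : ∀ (k : ℕ) (x : PiLp 2 Xs) (n : Fin N),
      ⟪f n k, A x n⟫ = ∑ m, Λ k n m * ⟪e m k, x m⟫)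
    (Λd : ℕ → Matrix (Fin M) (Fin N) ℂ)
    (hMP1 : ∀ k, Λ k * Λd k * Λ k = Λ k)
    (hMP2 : ∀ k, Λd k * Λ k * Λd k = Λd k)
    (hMP3 : ∀ k, (Λ k * Λd k)ᴴ = Λ k * Λd k)
    (hMP4 : ∀ k, (Λd k * Λ k)ᴴ = Λd k * Λ k)
    (y : PiLp 2 Ys)
    (hrange : ∀ m, ∃ z : Xs m, ∀ k,
      ⟪e m k, z⟫ = (Λd k).mulVec (fun n => ⟪f n k, y n⟫) m) :
    ∃ x : PiLp 2 Xs,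
      (∀ m, HasSum
        (fun k => ((Λd k).mulVec (fun n => ⟪f n k, y n⟫) m) • T m (e m k)) (x m)) ∧
      -- `x = 𝒜y` is a least-squares solution
      (∀ z : PiLp 2 Xs, ‖A x - y‖ ≤ ‖A z - y‖) ∧
      -- coefficient minimality among least-squares solutions
      (∀ xstar : PiLp 2 Xs, (∀ w : PiLp 2 Xs, ‖A xstar - y‖ ≤ ‖A w - y‖) →
        ∀ k, ∑ m, ‖⟪e m k, x m⟫‖ ^ 2 ≤ ∑ m, ‖⟪e m k, xstar m⟫‖ ^ 2) ∧
      -- norm comparison with the minimum-norm least-squares solution `x†`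
      (∀ xdag : PiLp 2 Xs,
        ((∀ w : PiLp 2 Xs, ‖A xdag - y‖ ≤ ‖A w - y‖) ∧
          (∀ z : PiLp 2 Xs, (∀ w : PiLp 2 Xs, ‖A z - y‖ ≤ ‖A w - y‖) → ‖xdag‖ ≤ ‖z‖)) →
        ‖xdag‖ ≤ ‖x‖ ∧ ‖x‖ ≤ Real.sqrt (B2 / B1) * ‖xdag‖) := by
  classical
  obtain ⟨z, hz⟩ := Classical.axiomOfChoice hrange
  set x : PiLp 2 Xs := (WithLp.equiv 2 (∀ m, Xs m)).symm z with hxdef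
  have hxm : ∀ m, x m = z m := fun m => rfl
  -- Euclidean vectors of coefficients
  set bvec : ℕ → EuclideanSpace ℂ (Fin N) :=
    fun k => (WithLp.equiv 2 (Fin N → ℂ)).symm (fun n => ⟪f n k, y n⟫) with hbvec
  set avec : PiLp 2 Xs → ℕ → EuclideanSpace ℂ (Fin M) :=
    fun w k => (WithLp.equiv 2 (Fin M → ℂ)).symm (fun m => ⟪e m k, w m⟫) with havec
  have havm : ∀ w k m, avec w k m = ⟪e m k, w m⟫ := fun _ _ _ => rfl
  have hbn : ∀ k n, bvec k n = ⟪f n k, y n⟫ := fun _ _ => rfl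
  set g : PiLp 2 Xs → ℕ → ℝ :=
    fun w k => ‖Matrix.toEuclideanLin (Λ k) (avec w k) - bvec k‖ ^ 2 with hgdef
  -- the coefficients of x are given by the pseudoinverse
  have havx : ∀ k, avec x k = Matrix.toEuclideanLin (Λd k) (bvec k) := by
    intro k
    ext m
    show ⟪e m k, z m⟫ = _
    rw [hz m k]
    rfl
  -- bridging identity
  have hnorm : ∀ (w : PiLp 2 Xs) (k : ℕ),
      (∑ n, ‖⟪f n k, (A w - y) n⟫‖ ^ 2) = g w k := by
    intro w k
    simp only [hgdef]
    rw [PiLp.norm_sq_eq_of_L2]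
    refine Finset.sum_congr rfl fun n _ => ?_
    congr 1
    have h1 : (A w - y) n = A w n - y n := rfl
    have h2 : (Matrix.toEuclideanLin (Λ k) (avec w k) - bvec k) n
        = (∑ m, Λ k n m * ⟪e m k, w m⟫) - ⟪f n k, y n⟫ := by
      show (Λ k).mulVec (fun m => ⟪e m k, w m⟫) n - ⟪f n k, y n⟫ = _
      simp [Matrix.mulVec, dotProduct]
    rw [h1, h2, inner_sub_right, hΛ k w n]
  -- master sum formula
  have key : ∀ w : PiLp 2 Xs, HasSum (g w) (C * ‖A w - y‖ ^ 2) := by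
    intro w
    have h1 : HasSum (fun k => ∑ n, ‖⟪f n k, (A w - y) n⟫‖ ^ 2)
        (∑ n, C * ‖(A w - y) n‖ ^ 2) :=
      hasSum_sum fun n _ => htight_f n _
    rw [← Finset.mul_sum, ← PiLp.norm_sq_eq_of_L2] at h1
    rwa [show (fun k => ∑ n, ‖⟪f n k, (A w - y) n⟫‖ ^ 2) = g w from funext (hnorm w)] at h1
  -- termwise minimality
  have hterm : ∀ (w : PiLp 2 Xs) (k : ℕ), g x k ≤ g w k := by
    intro w k
    simp only [hgdef, havx k]
    exact pow_le_pow_left₀ (norm_nonneg _)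
      ((mp_aux (Λ k) (Λd k) (hMP1 k) (hMP3 k) (bvec k) (avec w k)).1) 2
  -- least squares property
  have hLS : ∀ w : PiLp 2 Xs, ‖A x - y‖ ≤ ‖A w - y‖ := by
    intro w
    have h1 : C * ‖A x - y‖ ^ 2 ≤ C * ‖A w - y‖ ^ 2 :=
      hasSum_le (hterm w) (key x) (key w)
    have h2 : ‖A x - y‖ ^ 2 ≤ ‖A w - y‖ ^ 2 := le_of_mul_le_mul_left h1 hC
    exact (pow_le_pow_iff_left₀ (norm_nonneg _) (norm_nonneg _) two_ne_zero).mp h2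
  -- coefficient minimality
  have hcoeff : ∀ xstar : PiLp 2 Xs, (∀ w : PiLp 2 Xs, ‖A xstar - y‖ ≤ ‖A w - y‖) →
      ∀ k, ∑ m, ‖⟪e m k, x m⟫‖ ^ 2 ≤ ∑ m, ‖⟪e m k, xstar m⟫‖ ^ 2 := by
    intro xs hxs k0
    have heq : ‖A x - y‖ = ‖A xs - y‖ := le_antisymm (hLS xs) (hxs x)
    have hsxs : HasSum (g xs) (C * ‖A x - y‖ ^ 2) := by rw [heq]; exact key xs
    -- pointwise equality of the two sums
    have hrev : g xs k0 ≤ g x k0 := by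
      have hupd : HasSum (Function.update (g x) k0 (g xs k0))
          (g xs k0 - g x k0 + (C * ‖A x - y‖ ^ 2)) := (key x).update k0 (g xs k0)
      have hle2 : g xs k0 - g x k0 + (C * ‖A x - y‖ ^ 2) ≤ C * ‖A x - y‖ ^ 2 := by
        refine hasSum_le (fun k => ?_) hupd hsxs
        by_cases hk : k = k0
        · subst hk; simp
        · rw [Function.update_of_ne hk]; exact hterm xs k
      linarith
    have geq : g x k0 = g xs k0 := le_antisymm (hterm xs k0) hrev
    -- equality case of least squares
    have hle : ‖Matrix.toEuclideanLin (Λ k0) (avec xs k0) - bvec k0‖ ≤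
        ‖Matrix.toEuclideanLin (Λ k0) (Matrix.toEuclideanLin (Λd k0) (bvec k0)) - bvec k0‖ := by
      have h := geq
      simp only [hgdef, havx k0] at h
      exact (pow_le_pow_iff_left₀ (norm_nonneg _) (norm_nonneg _) two_ne_zero).mp h.ge
    have heqmat := (mp_aux (Λ k0) (Λd k0) (hMP1 k0) (hMP3 k0) (bvec k0) (avec xs k0)).2 hle
    have hmin := mp_aux2 (Λ k0) (Λd k0) (hMP2 k0) (hMP4 k0) (bvec k0) (avec xs k0) heqmat
    have h1 : ∑ m, ‖⟪e m k0, x m⟫‖ ^ 2 = ‖avec x k0‖ ^ 2 := by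
      rw [PiLp.norm_sq_eq_of_L2]
      exact Finset.sum_congr rfl fun m _ => by rw [havm]
    have h2 : ∑ m, ‖⟪e m k0, xs m⟫‖ ^ 2 = ‖avec xs k0‖ ^ 2 := by
      rw [PiLp.norm_sq_eq_of_L2]
      exact Finset.sum_congr rfl fun m _ => by rw [havm]
    rw [h1, h2, havx k0]
    exact pow_le_pow_left₀ (norm_nonneg _) hmin 2
  refine ⟨x, ?_, hLS, hcoeff, ?_⟩
  · intro m
    have h1 := (T m).hasSum (hS m (z m))
    simp only [map_smul] at h1
    have hTSz : T m (S m (z m)) = z m := by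
      have h := congrArg (fun (L : Xs m →L[ℂ] Xs m) => L (z m)) (hTS m)
      simpa using h
    rw [hTSz] at h1
    have hfun : (fun k => ⟪e m k, z m⟫ • T m (e m k))
        = fun k => ((Λd k).mulVec (fun n => ⟪f n k, y n⟫) m) • T m (e m k) :=
      funext fun k => by rw [hz m k]
    rw [hfun] at h1
    exact (hxm m).symm ▸ h1
  · rintro xd ⟨hd1, hd2⟩
    refine ⟨hd2 x hLS, ?_⟩
    have h3d := hcoeff xd hd1
    have hsum_x : ∀ m, Summable (fun k => ‖⟪e m k, x m⟫‖ ^ 2) := fun m => (hframe_e m (x m)).1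
    have hsum_d : ∀ m, Summable (fun k => ‖⟪e m k, xd m⟫‖ ^ 2) := fun m => (hframe_e m (xd m)).1
    have hx1 : B1 * ‖x‖ ^ 2 ≤ ∑ m, ∑' k, ‖⟪e m k, x m⟫‖ ^ 2 := by
      rw [PiLp.norm_sq_eq_of_L2, Finset.mul_sum]
      exact Finset.sum_le_sum fun m _ => (hframe_e m (x m)).2.1
    have hswap_x : ∑ m, ∑' k, ‖⟪e m k, x m⟫‖ ^ 2 = ∑' k, ∑ m, ‖⟪e m k, x m⟫‖ ^ 2 :=
      (Summable.tsum_finsetSum fun m _ => hsum_x m).symm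
    have hswap_d : ∑' k, ∑ m, ‖⟪e m k, xd m⟫‖ ^ 2 = ∑ m, ∑' k, ‖⟪e m k, xd m⟫‖ ^ 2 :=
      Summable.tsum_finsetSum fun m _ => hsum_d m
    have hmid : ∑' k, ∑ m, ‖⟪e m k, x m⟫‖ ^ 2 ≤ ∑' k, ∑ m, ‖⟪e m k, xd m⟫‖ ^ 2 :=
      Summable.tsum_le_tsum h3d (summable_sum fun m _ => hsum_x m) (summable_sum fun m _ => hsum_d m)
    have hx2 : ∑ m, ∑' k, ‖⟪e m k, xd m⟫‖ ^ 2 ≤ B2 * ‖xd‖ ^ 2 := by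
      rw [PiLp.norm_sq_eq_of_L2, Finset.mul_sum]
      exact Finset.sum_le_sum fun m _ => (hframe_e m (xd m)).2.2
    have hB : B1 * ‖x‖ ^ 2 ≤ B2 * ‖xd‖ ^ 2 := by linarith
    have hxx : ‖x‖ ^ 2 ≤ (B2 / B1) * ‖xd‖ ^ 2 := by
      rw [div_mul_eq_mul_div, le_div_iff₀ hB1]
      linarith
    calc ‖x‖ = Real.sqrt (‖x‖ ^ 2) := (Real.sqrt_sq (norm_nonneg _)).symm
      _ ≤ Real.sqrt ((B2 / B1) * ‖xd‖ ^ 2) := Real.sqrt_le_sqrt hxx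
      _ = Real.sqrt (B2 / B1) * ‖xd‖ := by
          rw [Real.sqrt_mul (by positivity), Real.sqrt_sq (norm_nonneg _)]
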